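/- Let A = (I-Q)^{-1} where Q is an irreducible substochastic matrix, so A has strictly positive entries with Perron eigenvalue β and left Perron eigenvector μ̄ (a probability vector). Then any solution of ν̇(t)ᵀ = ν(t)ᵀA - (ν(t)ᵀA𝟙)ν(t)ᵀ with ν(0) in the probability simplex converges to μ̄ as t → ∞. -/

import Mathlib

open Matrix Filter

section LinftyAux

open NormedSpace

attribute [local instance] Matrix.linftyOpNormedAddCommGroup Matrix.linftyOpNormedRing
  Matrix.linftyOpNormedAlgebra

namespace QSD13

variable {n : ℕ}

lemma entry_norm_le (M : Matrix (Fin n) (Fin n) ℂ) (i j : Fin n) : ‖M i j‖ ≤ ‖M‖ := by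
  have h1 : ‖M i j‖₊ ≤ ∑ j', ‖M i j'‖₊ :=
    Finset.single_le_sum (f := fun j' => ‖M i j'‖₊) (fun _ _ => zero_le) (Finset.mem_univ j)
  have h2 : (∑ j', ‖M i j'‖₊) ≤ ‖M‖₊ := by
    rw [Matrix.linfty_opNNNorm_def]
    exact Finset.le_sup (f := fun i => ∑ j', ‖M i j'‖₊) (Finset.mem_univ i)
  exact_mod_cast h1.trans h2

lemma pow_entry_nonneg {Q : Matrix (Fin n) (Fin n) ℝ} (hQ : ∀ i j, 0 ≤ Q i j) :
    ∀ k i j, 0 ≤ (Q ^ k) i j := by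
  intro k
  induction k with
  | zero => intro i j; simp [Matrix.one_apply]; positivity
  | succ k ih =>
    intro i j
    rw [pow_succ, Matrix.mul_apply]
    exact Finset.sum_nonneg fun l _ => mul_nonneg (ih i l) (hQ l j)

lemma telescope {f : ℕ → ℝ} (hf : Summable f) :
    ∑' k, (f k - f (k + 1)) = f 0 := by
  have h1 : Summable (fun k => f (k + 1)) := (summable_nat_add_iff 1).2 hf
  rw [Summable.tsum_sub hf h1, Summable.tsum_eq_zero_add hf]
  ring

lemma inv_one_sub_entry_pos (hn : 0 < n) (Q : Matrix (Fin n) (Fin n) ℝ)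
    (hQnonneg : ∀ i j, 0 ≤ Q i j) (hirr : ∀ i j, ∃ k : ℕ, 0 < (Q ^ k) i j)
    (hspec : ∀ z ∈ spectrum ℂ (Q.map (Complex.ofReal)), ‖z‖ < 1) :
    ∀ i j, 0 < (1 - Q)⁻¹ i j := by
  haveI : Nonempty (Fin n) := Fin.pos_iff_nonempty.mp hn
  haveI : Nontrivial (Matrix (Fin n) (Fin n) ℂ) := by
    refine ⟨0, 1, fun h => ?_⟩
    have := congrFun (congrFun h ⟨0, hn⟩) ⟨0, hn⟩
    simp [Matrix.one_apply] at this
  set Qc := Q.map (Complex.ofReal) with hQc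
  have hpow : ∀ k : ℕ, Qc ^ k = (Q ^ k).map (Complex.ofReal) := by
    intro k
    have : Qc = Complex.ofRealHom.mapMatrix Q := rfl
    rw [this, ← map_pow]
    rfl
  -- spectral radius < 1
  have hrad : spectralRadius ℂ Qc < 1 := by
    have hne : (spectrum ℂ Qc).Nonempty := spectrum.nonempty Qc
    have := spectrum.spectralRadius_lt_of_forall_lt_of_nonempty hne
      (r := 1) (fun k hk => by have h := hspec k hk; have : ‖k‖₊ < 1 := (by exact_mod_cast h); simpa using this)
    simpa using this
  obtain ⟨c, hc1, hc2⟩ := ENNReal.lt_iff_exists_nnreal_btwn.mp hrad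
  have hc2' : c < 1 := by exact_mod_cast hc2
  have hgel := spectrum.pow_nnnorm_pow_one_div_tendsto_nhds_spectralRadius Qc
  have hev : ∀ᶠ k : ℕ in atTop, ((‖Qc ^ k‖₊ : ENNReal)) ^ (1 / (k:ℝ)) < (c : ENNReal) :=
    hgel.eventually_lt_const hc1
  have hbound : ∀ᶠ k : ℕ in atTop, ‖Qc ^ k‖ ≤ (c:ℝ) ^ k := by
    filter_upwards [hev, eventually_ge_atTop 1] with k hk hk1
    have hk0 : (k : ℝ) ≠ 0 := by positivity
    have : ((‖Qc ^ k‖₊ : ENNReal)) ≤ (c : ENNReal) ^ (k : ℝ) := by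
      calc ((‖Qc ^ k‖₊ : ENNReal)) = (((‖Qc ^ k‖₊ : ENNReal)) ^ (1 / (k:ℝ))) ^ (k:ℝ) := by
            rw [← ENNReal.rpow_mul, one_div, inv_mul_cancel₀ hk0, ENNReal.rpow_one]
        _ ≤ (c : ENNReal) ^ (k:ℝ) := by
            exact ENNReal.rpow_le_rpow hk.le (by positivity)
    have h2 : ((‖Qc ^ k‖₊ : ENNReal)) ≤ ((c ^ k : NNReal) : ENNReal) := by
      rw [ENNReal.coe_pow, ← ENNReal.rpow_natCast (c:ENNReal) k]; exact this
    have h3 : ‖Qc ^ k‖₊ ≤ c ^ k := by exact_mod_cast h2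
    calc ‖Qc ^ k‖ = ((‖Qc ^ k‖₊ : ℝ)) := rfl
      _ ≤ ((c ^ k : NNReal) : ℝ) := by exact_mod_cast h3
      _ = (c:ℝ) ^ k := by push_cast; ring
  have hsum : ∀ i j, Summable (fun k => (Q ^ k) i j) := by
    intro i j
    apply Summable.of_norm_bounded_eventually (g := fun k => (c:ℝ)^k)
      (summable_geometric_of_lt_one c.2 hc2')
    rw [Nat.cofinite_eq_atTop]
    filter_upwards [hbound] with k hk
    have : ‖(Q ^ k) i j‖ = ‖(Qc ^ k) i j‖ := by
      rw [hpow k]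
      simp [Matrix.map_apply]
    rw [this]
    exact (entry_norm_le _ i j).trans hk
  set S : Matrix (Fin n) (Fin n) ℝ := Matrix.of (fun i j => ∑' k, (Q ^ k) i j) with hS
  have hleft : S * (1 - Q) = 1 := by
    ext i j
    rw [Matrix.mul_apply]
    have h1 : ∀ l, S i l * (1 - Q) l j = ∑' k, ((Q ^ k) i l * (1 - Q) l j) := fun l =>
      (tsum_mul_right).symm
    simp_rw [h1]
    rw [← Summable.tsum_finsetSum (fun l _ => (hsum i l).mul_right _)]
    have h2 : ∀ k : ℕ, (∑ l, (Q ^ k) i l * (1 - Q) l j)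
        = (fun k => (Q ^ k) i j) k - (fun k => (Q ^ k) i j) (k + 1) := by
      intro k
      rw [← Matrix.mul_apply, mul_one_sub, Matrix.sub_apply, ← pow_succ]
    simp_rw [h2]
    rw [telescope (hsum i j)]
    simp
  have hAS : (1 - Q)⁻¹ = S := Matrix.inv_eq_left_inv hleft
  intro i j
  rw [hAS]
  obtain ⟨k₀, hk₀⟩ := hirr i j
  calc (0:ℝ) < (Q ^ k₀) i j := hk₀
    _ ≤ ∑' k, (Q ^ k) i j := Summable.le_tsum (hsum i j) k₀ (fun k _ => pow_entry_nonneg hQnonneg k i j)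


noncomputable def entryCLM (i j : Fin n) : Matrix (Fin n) (Fin n) ℝ →L[ℝ] ℝ :=
  LinearMap.toContinuousLinearMap
    { toFun := fun M => M i j
      map_add' := fun _ _ => rfl
      map_smul' := fun _ _ => rfl }

@[simp] lemma entryCLM_apply (i j : Fin n) (M : Matrix (Fin n) (Fin n) ℝ) :
    entryCLM i j M = M i j := rfl

noncomputable def mulVecCLM (v : Fin n → ℝ) : Matrix (Fin n) (Fin n) ℝ →L[ℝ] (Fin n → ℝ) :=
  LinearMap.toContinuousLinearMap
    { toFun := fun M => M.mulVec v
      map_add' := fun A B => Matrix.add_mulVec A B v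
      map_smul' := fun c A => Matrix.smul_mulVec c A v }

@[simp] lemma mulVecCLM_apply (v : Fin n → ℝ) (M : Matrix (Fin n) (Fin n) ℝ) :
    mulVecCLM v M = M.mulVec v := rfl

lemma exp_entry_summable (M : Matrix (Fin n) (Fin n) ℝ) (i j : Fin n) :
    Summable (fun k : ℕ => ((k.factorial : ℝ))⁻¹ * (M ^ k) i j) := by
  have h := expSeries_summable' (𝕂 := ℝ) M
  have := h.map (entryCLM i j).toLinearMap (entryCLM i j).continuous
  simpa [Function.comp_def] using this

lemma exp_entry_eq (M : Matrix (Fin n) (Fin n) ℝ) (i j : Fin n) :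
    exp M i j = ∑' k : ℕ, ((k.factorial : ℝ))⁻¹ * (M ^ k) i j := by
  have h := (entryCLM i j).map_tsum (expSeries_summable' (𝕂 := ℝ) M)
  rw [exp_eq_tsum ℝ]
  simpa using h

lemma exp_entry_nonneg {M : Matrix (Fin n) (Fin n) ℝ} (hM : ∀ i j, 0 ≤ M i j) (i j : Fin n) :
    0 ≤ exp M i j := by
  rw [exp_entry_eq]
  exact tsum_nonneg fun k => mul_nonneg (by positivity) (pow_entry_nonneg hM k i j)

lemma le_exp_entry {M : Matrix (Fin n) (Fin n) ℝ} (hM : ∀ i j, 0 ≤ M i j) (i j : Fin n) :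
    M i j ≤ exp M i j := by
  rw [exp_entry_eq]
  have := Summable.le_tsum (exp_entry_summable M i j) 1
    (fun k _ => mul_nonneg (by positivity) (pow_entry_nonneg hM k i j))
  simpa using this

lemma exp_mulVec_eigen (M : Matrix (Fin n) (Fin n) ℝ) (v : Fin n → ℝ) (b : ℝ)
    (hv : M.mulVec v = b • v) :
    (exp M).mulVec v = Real.exp b • v := by
  have hpow : ∀ k : ℕ, (M ^ k).mulVec v = (b ^ k) • v := by
    intro k
    induction k with
    | zero => simp
    | succ k ih =>
      rw [pow_succ', ← Matrix.mulVec_mulVec, ih, Matrix.mulVec_smul, hv, smul_smul,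
        pow_succ']
      ring_nf
  have h := (mulVecCLM v).map_tsum (expSeries_summable' (𝕂 := ℝ) M)
  rw [exp_eq_tsum ℝ]
  rw [show (mulVecCLM v) (∑' k : ℕ, ((k.factorial : ℝ))⁻¹ • M ^ k)
      = (∑' k : ℕ, ((k.factorial : ℝ))⁻¹ • M ^ k).mulVec v from rfl] at h
  rw [h]
  have h2 : ∀ k : ℕ, (mulVecCLM v) (((k.factorial : ℝ))⁻¹ • M ^ k)
      = (((k.factorial : ℝ))⁻¹ * b ^ k) • v := by
    intro k
    simp [Matrix.smul_mulVec, hpow k, smul_smul]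
  rw [tsum_congr h2, Summable.tsum_smul_const]
  · congr 1
    rw [Real.exp_eq_exp_ℝ, exp_eq_tsum ℝ]
    simp [smul_eq_mul]
  · have := expSeries_summable' (𝕂 := ℝ) b
    simpa [smul_eq_mul] using this

lemma exp_smul_add (M : Matrix (Fin n) (Fin n) ℝ) (s t : ℝ) :
    exp ((s + t) • M) = exp (s • M) * exp (t • M) := by
  rw [add_smul]
  exact exp_add_of_commute (((Commute.refl M).smul_left s).smul_right t)

lemma hasDerivAt_exp_entry (M : Matrix (Fin n) (Fin n) ℝ) (t : ℝ) (i j : Fin n) :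
    HasDerivAt (fun u : ℝ => exp (u • M) i j) ((M * exp (t • M)) i j) t := by
  have h := hasDerivAt_exp_smul_const' (𝕂 := ℝ) M t
  have h2 := ((entryCLM i j).hasFDerivAt (x := exp (t • M))).comp_hasDerivAt t h
  exact h2


lemma sum_mulVec_transpose (A : Matrix (Fin n) (Fin n) ℝ) (x : Fin n → ℝ) :
    (∑ i, Aᵀ.mulVec x i) = x ⬝ᵥ A.mulVec (fun _ => 1) := by
  simp only [Matrix.mulVec, dotProduct, Matrix.transpose_apply, mul_one]
  rw [Finset.sum_comm]
  congr 1; ext j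
  rw [Finset.mul_sum]
  exact Finset.sum_congr rfl fun i _ => by ring

end QSD13

end LinftyAux

def MatIrreducible {n : ℕ} (Q : Matrix (Fin n) (Fin n) ℝ) : Prop :=
  ∀ i j, ∃ k : ℕ, 0 < (Q ^ k) i j

open QSD13 NormedSpace in
set_option maxHeartbeats 2000000 in
/-- for `A = (I-Q)⁻¹` with `Q` irreducible substochastic, any
solution of `ν̇ᵀ = νᵀA - (νᵀA𝟙)νᵀ` starting in the probability simplex converges
to the quasi-stationary distribution `μ̄` as `t → ∞`. -/
theorem ode_converges_to_qsd {n : ℕ} (Q : Matrix (Fin n) (Fin n) ℝ)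
    (hQnonneg : ∀ i j, 0 ≤ Q i j) (hirr : MatIrreducible Q)
    (hspec : ∀ z ∈ spectrum ℂ (Q.map (Complex.ofReal)), ‖z‖ < 1)
    (A : Matrix (Fin n) (Fin n) ℝ) (hA : A = (1 - Q)⁻¹)
    (β : ℝ) (hβpos : 0 < β) (hβmem : β ∈ spectrum ℝ A)
    (hβmax : ∀ z ∈ spectrum ℂ (A.map (Complex.ofReal)), ‖z‖ ≤ β)
    (μbar : Fin n → ℝ) (hμpos : ∀ i, 0 < μbar i) (hμsum : (∑ i, μbar i) = 1)
    (hμeig : Matrix.vecMul μbar A = β • μbar)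
    (ν : ℝ → Fin n → ℝ)
    (hode : ∀ t : ℝ, HasDerivAt ν
      ((Aᵀ).mulVec (ν t) - ((ν t) ⬝ᵥ A.mulVec (fun _ => 1)) • (ν t)) t)
    (h0nonneg : ∀ i, 0 ≤ ν 0 i) (h0sum : (∑ i, ν 0 i) = 1) :
    Tendsto ν atTop (nhds μbar) := by
  classical
  -- basic setup
  have hn : 0 < n := by
    rcases Nat.eq_zero_or_pos n with h | h
    · exfalso; subst h; simp at hμsum
    · exact h
  haveI : Nonempty (Fin n) := Fin.pos_iff_nonempty.mp hn
  have hApos : ∀ i j, 0 < A i j := by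
    rw [hA]; exact inv_one_sub_entry_pos hn Q hQnonneg hirr hspec
  have hAT : Matrix.mulVec Aᵀ μbar = β • μbar := by
    rw [Matrix.mulVec_transpose, hμeig]
  have hμle1 : ∀ i, μbar i ≤ 1 := by
    intro i
    rw [← hμsum]
    exact Finset.single_le_sum (f := fun i => μbar i) (fun j _ => (hμpos j).le)
      (Finset.mem_univ i)
  -- minimum entries
  set a : ℝ := Finset.inf' Finset.univ Finset.univ_nonempty (fun p : Fin n × Fin n => A p.1 p.2)
    with ha_def
  have ha_le : ∀ i j, a ≤ A i j := fun i j =>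
    Finset.inf'_le _ (Finset.mem_univ ((i, j) : Fin n × Fin n))
  have ha_pos : 0 < a := by
    obtain ⟨p, -, hp⟩ := Finset.exists_mem_eq_inf' Finset.univ_nonempty
      (fun p : Fin n × Fin n => A p.1 p.2)
    rw [ha_def, hp]; exact hApos p.1 p.2
  set μmin : ℝ := Finset.inf' Finset.univ Finset.univ_nonempty μbar with hμmin_def
  have hμmin_le : ∀ i, μmin ≤ μbar i := fun i => Finset.inf'_le _ (Finset.mem_univ i)
  have hμmin_pos : 0 < μmin := by
    obtain ⟨i, -, hi⟩ := Finset.exists_mem_eq_inf' Finset.univ_nonempty μbar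
    rw [hμmin_def, hi]; exact hμpos i
  -- exponential semigroup
  set E : ℝ → Matrix (Fin n) (Fin n) ℝ := fun s => exp (s • Aᵀ) with hE_def
  have hEeig : ∀ s : ℝ, (E s).mulVec μbar = Real.exp (s * β) • μbar := by
    intro s
    apply exp_mulVec_eigen
    rw [Matrix.smul_mulVec, hAT, smul_smul]
  have hEnonneg : ∀ s : ℝ, 0 ≤ s → ∀ i j, 0 ≤ E s i j := by
    intro s hs i j
    refine exp_entry_nonneg (fun i j => ?_) i j
    simp only [Matrix.smul_apply, Matrix.transpose_apply, smul_eq_mul]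
    exact mul_nonneg hs (hApos j i).le
  have hE1 : ∀ i j, a ≤ E 1 i j := by
    intro i j
    have h := le_exp_entry (M := (1:ℝ) • Aᵀ) (fun i j => by
      simp only [Matrix.smul_apply, Matrix.transpose_apply, smul_eq_mul, one_mul]
      exact (hApos j i).le) i j
    simp only [Matrix.smul_apply, Matrix.transpose_apply, smul_eq_mul, one_mul] at h
    exact (ha_le j i).trans h
  have hsemi : ∀ t s : ℝ, E (t + s) = E s * E t := by
    intro t s
    rw [hE_def]
    simp only []
    rw [add_comm t s]
    exact exp_smul_add Aᵀ s t
  have hE0 : E 0 = 1 := by rw [hE_def]; simp only [zero_smul]; exact exp_zero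
  have hEcomm : ∀ s : ℝ, Aᵀ * E s = E s * Aᵀ := by
    intro s
    exact (((Commute.refl Aᵀ).smul_right s).exp_right).eq
  -- the linear solution
  set u : ℝ → Fin n → ℝ := fun t => (E t).mulVec (ν 0) with hu_def
  set r : ℝ → ℝ := fun t => (ν t) ⬝ᵥ A.mulVec (fun _ => 1) with hr_def
  have hνc : ∀ i (t : ℝ), HasDerivAt (fun t => ν t i)
      ((Aᵀ.mulVec (ν t)) i - r t * ν t i) t := by
    intro i t
    have h := hasDerivAt_pi.mp (hode t) i
    simpa [Pi.sub_apply, Pi.smul_apply, smul_eq_mul] using h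
  have hνcont : Continuous ν := by
    apply continuous_iff_continuousAt.mpr
    intro t
    exact (hode t).continuousAt
  have hrcont : Continuous r := by
    rw [hr_def]
    simp only [dotProduct]
    apply continuous_finset_sum
    intro i _
    exact (((continuous_apply i).comp hνcont).mul continuous_const)
  set R : ℝ → ℝ := fun t => ∫ s in (0:ℝ)..t, r s with hR_def
  have hRd : ∀ t, HasDerivAt R (r t) t := fun t =>
    (hrcont.integral_hasStrictDerivAt 0 t).hasDerivAt
  have hR0 : R 0 = 0 := by rw [hR_def]; simp
  set w : ℝ → Fin n → ℝ := fun t i => Real.exp (R t) * ν t i with hw_def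
  have hwd : ∀ i (t : ℝ), HasDerivAt (fun t => w t i)
      (Real.exp (R t) * (Aᵀ.mulVec (ν t) i)) t := by
    intro i t
    have h1 : HasDerivAt (fun t => Real.exp (R t)) (Real.exp (R t) * r t) t := (hRd t).exp
    have h2 := h1.fun_mul (hνc i t)
    refine h2.congr_deriv ?_
    ring
  -- derivative of entries of E (-t)
  have hEneg : ∀ (i j : Fin n) (t : ℝ), HasDerivAt (fun t => E (-t) i j)
      (-((Aᵀ * E (-t)) i j)) t := by
    intro i j t
    have h1 := hasDerivAt_exp_entry (-Aᵀ) t i j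
    have hfun : (fun u : ℝ => exp (u • (-Aᵀ)) i j) = fun u : ℝ => E (-u) i j := by
      funext u
      have huA : u • (-Aᵀ) = (-u) • Aᵀ := by rw [smul_neg, neg_smul]
      rw [huA]
    rw [hfun] at h1
    have htA : t • (-Aᵀ) = (-t) • Aᵀ := by rw [smul_neg, neg_smul]
    have hval : ((-Aᵀ) * exp (t • (-Aᵀ))) i j = -((Aᵀ * E (-t)) i j) := by
      rw [htA, Matrix.neg_mul, Matrix.neg_apply]
    rw [hval] at h1
    exact h1
  -- w t = u t
  have hkey : ∀ t, w t = u t := by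
    have hgd : ∀ (i : Fin n) (t : ℝ),
        HasDerivAt (fun t => (E (-t)).mulVec (w t) i) 0 t := by
      intro i t
      have hterm : ∀ j : Fin n, HasDerivAt (fun t => E (-t) i j * w t j)
          (-((Aᵀ * E (-t)) i j) * w t j
            + E (-t) i j * (Real.exp (R t) * (Aᵀ.mulVec (ν t) j))) t := by
        intro j
        exact (hEneg i j t).mul (hwd j t)
      have hsum := HasDerivAt.fun_sum (u := Finset.univ) (fun j _ => hterm j)
      have heq : (∑ j, (-((Aᵀ * E (-t)) i j) * w t j
          + E (-t) i j * (Real.exp (R t) * (Aᵀ.mulVec (ν t) j)))) = 0 := by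
        have hAw : ∀ j, Real.exp (R t) * (Aᵀ.mulVec (ν t) j) = Aᵀ.mulVec (w t) j := by
          intro j
          rw [hw_def]
          simp only [Matrix.mulVec, dotProduct]
          rw [Finset.mul_sum]
          congr 1; ext l; ring
        simp_rw [hAw]
        rw [Finset.sum_add_distrib]
        have e1 : (∑ j, -((Aᵀ * E (-t)) i j) * w t j) = -((Aᵀ * E (-t)).mulVec (w t) i) := by
          simp [Matrix.mulVec, dotProduct, Finset.sum_neg_distrib]
        have e2 : (∑ j, E (-t) i j * Aᵀ.mulVec (w t) j)
            = ((E (-t)) * Aᵀ).mulVec (w t) i := by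
          rw [← Matrix.mulVec_mulVec]
          simp [Matrix.mulVec, dotProduct]
        rw [e1, e2, hEcomm]
        ring
      rw [heq] at hsum
      exact hsum
    have hgconst : ∀ (i : Fin n) (t : ℝ),
        (E (-t)).mulVec (w t) i = (E (-(0:ℝ))).mulVec (w 0) i := by
      intro i t
      have hdiff : Differentiable ℝ (fun t => (E (-t)).mulVec (w t) i) :=
        fun t => (hgd i t).differentiableAt
      have hderiv : ∀ t, deriv (fun t => (E (-t)).mulVec (w t) i) t = 0 :=
        fun t => (hgd i t).deriv
      exact is_const_of_deriv_eq_zero hdiff hderiv t 0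
    intro t
    have h0 : (E (-t)).mulVec (w t) = ν 0 := by
      funext i
      rw [hgconst i t]
      rw [neg_zero, hE0]
      rw [Matrix.one_mulVec]
      rw [hw_def]
      simp [hR0]
    have := congrArg (fun x => (E t).mulVec x) h0
    rw [Matrix.mulVec_mulVec, ← hsemi, neg_add_cancel, hE0, Matrix.one_mulVec] at this
    rw [this, hu_def]
  -- sum of ν is 1
  have hS1 : ∀ t, (∑ i, ν t i) = 1 := by
    have hSd : ∀ t, HasDerivAt (fun t => ∑ i, ν t i)
        (r t * (1 - ∑ i, ν t i)) t := by
      intro t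
      have h := HasDerivAt.fun_sum (u := Finset.univ) (fun i (_ : i ∈ Finset.univ) => hνc i t)
      have heq : (∑ i, ((Aᵀ.mulVec (ν t)) i - r t * ν t i))
          = r t * (1 - ∑ i, ν t i) := by
        rw [Finset.sum_sub_distrib]
        rw [sum_mulVec_transpose]
        rw [← Finset.mul_sum]
        rw [hr_def]
        ring
      rw [heq] at h
      exact h
    have hconst : ∀ t, Real.exp (R t) * ((∑ i, ν t i) - 1)
        = Real.exp (R 0) * ((∑ i, ν 0 i) - 1) := by
      intro t
      have hd : ∀ t, HasDerivAt (fun t => Real.exp (R t) * ((∑ i, ν t i) - 1)) 0 t := by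
        intro t
        have h1 : HasDerivAt (fun t => Real.exp (R t)) (Real.exp (R t) * r t) t := (hRd t).exp
        have h2 := h1.fun_mul ((hSd t).sub_const 1)
        refine h2.congr_deriv ?_
        ring
      exact is_const_of_deriv_eq_zero (fun s => (hd s).differentiableAt)
        (fun s => (hd s).deriv) t 0
    intro t
    have h := hconst t
    rw [h0sum] at h
    simp only [sub_self, mul_zero] at h
    have hexp : Real.exp (R t) ≠ 0 := Real.exp_ne_zero _
    have := mul_eq_zero.mp h
    rcases this with h' | h'
    · exact absurd h' hexp
    · linarith [h']
  -- formula for ν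
  have hσ : ∀ t, (∑ i, u t i) = Real.exp (R t) := by
    intro t
    rw [← hkey]
    rw [hw_def]
    simp only [← Finset.mul_sum, hS1 t, mul_one]
  have hνu : ∀ t i, ν t i = u t i / Real.exp (R t) := by
    intro t i
    rw [← hkey, hw_def]
    field_simp
  -- the rescaled solution z
  set z : ℝ → Fin n → ℝ := fun t i => Real.exp (-(β * t)) * u t i with hz_def
  have hz0 : z 0 = ν 0 := by
    funext i
    rw [hz_def]
    simp only [mul_zero, neg_zero, Real.exp_zero, one_mul, hu_def, hE0, Matrix.one_mulVec]
  have hzstep : ∀ t s : ℝ, z (t + s) = fun i => Real.exp (-(β * s)) * (E s).mulVec (z t) i := by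
    intro t s
    funext i
    have hu' : u (t + s) = (E s).mulVec (u t) := by
      rw [hu_def]
      simp only
      rw [hsemi, ← Matrix.mulVec_mulVec]
    have h1 : (E s).mulVec (z t) i = Real.exp (-(β * t)) * (E s).mulVec (u t) i := by
      show (E s).mulVec (fun i => Real.exp (-(β * t)) * u t i) i = _
      simp only [Matrix.mulVec, dotProduct]
      rw [Finset.mul_sum]
      exact Finset.sum_congr rfl fun l _ => by ring
    show Real.exp (-(β * (t + s))) * u (t + s) i = _
    rw [hu', h1, ← mul_assoc, ← Real.exp_add]
    have : -(β * (t + s)) = -(β * s) + -(β * t) := by ring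
    rw [this]
  -- min/max ratio functions
  set mfn : ℝ → ℝ := fun t => Finset.inf' Finset.univ Finset.univ_nonempty
    (fun i => z t i / μbar i) with hm_def
  set Mfn : ℝ → ℝ := fun t => Finset.sup' Finset.univ Finset.univ_nonempty
    (fun i => z t i / μbar i) with hM_def
  have hm_le : ∀ t i, mfn t * μbar i ≤ z t i := by
    intro t i
    have h : mfn t ≤ z t i / μbar i :=
      Finset.inf'_le (fun i => z t i / μbar i) (Finset.mem_univ i)
    calc mfn t * μbar i ≤ (z t i / μbar i) * μbar i :=
          mul_le_mul_of_nonneg_right h (hμpos i).le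
      _ = z t i := div_mul_cancel₀ _ (ne_of_gt (hμpos i))
  have hM_ge : ∀ t i, z t i ≤ Mfn t * μbar i := by
    intro t i
    have h : z t i / μbar i ≤ Mfn t :=
      Finset.le_sup' (fun i => z t i / μbar i) (Finset.mem_univ i)
    calc z t i = (z t i / μbar i) * μbar i :=
          (div_mul_cancel₀ _ (ne_of_gt (hμpos i))).symm
      _ ≤ Mfn t * μbar i := mul_le_mul_of_nonneg_right h (hμpos i).le
  have hmM : ∀ t, mfn t ≤ Mfn t := by
    intro t
    obtain ⟨i⟩ := (inferInstance : Nonempty (Fin n))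
    exact (Finset.inf'_le (fun i => z t i / μbar i) (Finset.mem_univ i)).trans
      (Finset.le_sup' (fun i => z t i / μbar i) (Finset.mem_univ i))
  have hEsum : ∀ s : ℝ, ∀ (i : Fin n) (x : Fin n → ℝ),
      (E s).mulVec x i = ∑ j, E s i j * x j := fun _ _ _ => rfl
  have hEμsum : ∀ s : ℝ, ∀ i : Fin n,
      (∑ j, E s i j * μbar j) = Real.exp (s * β) * μbar i := by
    intro s i
    have h := congrFun (hEeig s) i
    simp only [Pi.smul_apply, smul_eq_mul] at h
    rw [← hEsum s i μbar, h]
  have hee : ∀ s : ℝ, Real.exp (-(β * s)) * Real.exp (s * β) = 1 := by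
    intro s
    rw [← Real.exp_add, show -(β * s) + s * β = 0 by ring, Real.exp_zero]
  -- monotonicity of mfn and antitonicity of Mfn
  have hm_mono : ∀ t s : ℝ, 0 ≤ s → mfn t ≤ mfn (t + s) := by
    intro t s hs
    apply Finset.le_inf'
    intro i _
    rw [le_div_iff₀ (hμpos i)]
    rw [hzstep t s]
    have h1 : (∑ j, E s i j * (mfn t * μbar j)) ≤ ∑ j, E s i j * z t j :=
      Finset.sum_le_sum fun j _ => mul_le_mul_of_nonneg_left (hm_le t j) (hEnonneg s hs i j)
    have h2 : (∑ j, E s i j * (mfn t * μbar j)) = mfn t * (Real.exp (s * β) * μbar i) := by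
      calc (∑ j, E s i j * (mfn t * μbar j)) = mfn t * ∑ j, E s i j * μbar j := by
            rw [Finset.mul_sum]; exact Finset.sum_congr rfl fun j _ => by ring
        _ = mfn t * (Real.exp (s * β) * μbar i) := by rw [hEμsum s i]
    have h3 : mfn t * (Real.exp (s * β) * μbar i) ≤ (E s).mulVec (z t) i := by
      rw [hEsum s i (z t)]; rw [← h2]; exact h1
    calc mfn t * μbar i
        = Real.exp (-(β * s)) * (mfn t * (Real.exp (s * β) * μbar i)) := by
          linear_combination (-(mfn t * μbar i)) * hee s
      _ ≤ Real.exp (-(β * s)) * (E s).mulVec (z t) i :=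
          mul_le_mul_of_nonneg_left h3 (Real.exp_nonneg _)
  have hM_anti : ∀ t s : ℝ, 0 ≤ s → Mfn (t + s) ≤ Mfn t := by
    intro t s hs
    apply Finset.sup'_le
    intro i _
    rw [div_le_iff₀ (hμpos i)]
    rw [hzstep t s]
    have h1 : (∑ j, E s i j * z t j) ≤ ∑ j, E s i j * (Mfn t * μbar j) :=
      Finset.sum_le_sum fun j _ => mul_le_mul_of_nonneg_left (hM_ge t j) (hEnonneg s hs i j)
    have h2 : (∑ j, E s i j * (Mfn t * μbar j)) = Mfn t * (Real.exp (s * β) * μbar i) := by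
      calc (∑ j, E s i j * (Mfn t * μbar j)) = Mfn t * ∑ j, E s i j * μbar j := by
            rw [Finset.mul_sum]; exact Finset.sum_congr rfl fun j _ => by ring
        _ = Mfn t * (Real.exp (s * β) * μbar i) := by rw [hEμsum s i]
    have h3 : (E s).mulVec (z t) i ≤ Mfn t * (Real.exp (s * β) * μbar i) := by
      rw [hEsum s i (z t), ← h2]; exact h1
    calc Real.exp (-(β * s)) * (E s).mulVec (z t) i
        ≤ Real.exp (-(β * s)) * (Mfn t * (Real.exp (s * β) * μbar i)) :=
          mul_le_mul_of_nonneg_left h3 (Real.exp_nonneg _)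
      _ = Mfn t * μbar i := by linear_combination (Mfn t * μbar i) * hee s
  -- contraction constant
  set c0 : ℝ := Real.exp (-β) * a * μmin with hc0_def
  have hc0pos : 0 < c0 := by positivity
  set c' : ℝ := min c0 (1/4) with hc'_def
  have hc'pos : 0 < c' := lt_min hc0pos (by norm_num)
  have hc'le : c' ≤ c0 := min_le_left _ _
  have hc'le4 : c' ≤ 1/4 := min_le_right _ _
  set q : ℝ := 1 - 2 * c' with hq_def
  have hq0 : 0 ≤ q := by rw [hq_def]; linarith
  have hq1 : q < 1 := by rw [hq_def]; linarith
  have hee' : Real.exp (-β) * Real.exp β = 1 := by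
    rw [← Real.exp_add]; simp
  -- one-step contraction
  have hcontr : ∀ t : ℝ, Mfn (t + 1) - mfn (t + 1) ≤ q * (Mfn t - mfn t) := by
    intro t
    obtain ⟨j₀, -, hj₀⟩ := Finset.exists_mem_eq_inf' Finset.univ_nonempty
      (fun i => z t i / μbar i)
    obtain ⟨j₁, -, hj₁⟩ := Finset.exists_mem_eq_sup' Finset.univ_nonempty
      (fun i => z t i / μbar i)
    have hzj₀ : z t j₀ = mfn t * μbar j₀ := by
      have h : mfn t = z t j₀ / μbar j₀ := hj₀
      rw [h, div_mul_cancel₀ _ (ne_of_gt (hμpos j₀))]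
    have hzj₁ : z t j₁ = Mfn t * μbar j₁ := by
      have h : Mfn t = z t j₁ / μbar j₁ := hj₁
      rw [h, div_mul_cancel₀ _ (ne_of_gt (hμpos j₁))]
    have hd0 : 0 ≤ Mfn t - mfn t := sub_nonneg.mpr (hmM t)
    have hc'dμ : ∀ i, c' * (Mfn t - mfn t) * μbar i
        ≤ Real.exp (-β) * (a * ((Mfn t - mfn t) * μmin)) := by
      intro i
      have h3 : c' * (Mfn t - mfn t) * μbar i ≤ c' * (Mfn t - mfn t) :=
        mul_le_of_le_one_right (by positivity) (hμle1 i)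
      have h5 : c0 * (Mfn t - mfn t) = Real.exp (-β) * (a * ((Mfn t - mfn t) * μmin)) := by
        rw [hc0_def]; ring
      nlinarith [mul_le_mul_of_nonneg_right hc'le hd0]
    have hE1exp : ∀ i, (∑ j, E 1 i j * μbar j) = Real.exp β * μbar i := by
      intro i
      rw [hEμsum 1 i, one_mul]
    -- upper estimate
    have hup : ∀ i, z (t + 1) i ≤ (Mfn t - c' * (Mfn t - mfn t)) * μbar i := by
      intro i
      rw [hzstep t 1]
      simp only [mul_one]
      have hdrop : E 1 i j₀ * (Mfn t * μbar j₀ - z t j₀)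
          ≤ ∑ j, E 1 i j * (Mfn t * μbar j - z t j) :=
        Finset.single_le_sum (f := fun j => E 1 i j * (Mfn t * μbar j - z t j))
          (fun j _ => mul_nonneg (hEnonneg 1 zero_le_one i j) (sub_nonneg.mpr (hM_ge t j)))
          (Finset.mem_univ j₀)
      have hterm : a * ((Mfn t - mfn t) * μmin) ≤ E 1 i j₀ * (Mfn t * μbar j₀ - z t j₀) := by
        rw [hzj₀, show Mfn t * μbar j₀ - mfn t * μbar j₀ = (Mfn t - mfn t) * μbar j₀ by ring]
        exact mul_le_mul (hE1 i j₀) (mul_le_mul_of_nonneg_left (hμmin_le j₀) hd0)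
          (by positivity) ((ha_pos.le).trans (hE1 i j₀))
      have hsplit : (∑ j, E 1 i j * z t j)
          = (∑ j, E 1 i j * (Mfn t * μbar j)) - ∑ j, E 1 i j * (Mfn t * μbar j - z t j) := by
        rw [← Finset.sum_sub_distrib]
        exact Finset.sum_congr rfl fun j _ => by ring
      have h2 : (∑ j, E 1 i j * (Mfn t * μbar j)) = Mfn t * (Real.exp β * μbar i) := by
        calc (∑ j, E 1 i j * (Mfn t * μbar j)) = Mfn t * ∑ j, E 1 i j * μbar j := by
              rw [Finset.mul_sum]; exact Finset.sum_congr rfl fun j _ => by ring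
          _ = Mfn t * (Real.exp β * μbar i) := by rw [hE1exp i]
      have hupS : (∑ j, E 1 i j * z t j)
          ≤ Mfn t * (Real.exp β * μbar i) - a * ((Mfn t - mfn t) * μmin) := by
        rw [hsplit, h2]
        linarith [hterm.trans hdrop]
      have e2 : Real.exp (-β) * ((E 1).mulVec (z t) i)
          ≤ Real.exp (-β) * (Mfn t * (Real.exp β * μbar i) - a * ((Mfn t - mfn t) * μmin)) := by
        apply mul_le_mul_of_nonneg_left _ (Real.exp_nonneg _)
        rw [hEsum 1 i (z t)]
        exact hupS
      have e3 : Real.exp (-β) * (Mfn t * (Real.exp β * μbar i) - a * ((Mfn t - mfn t) * μmin))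
          = Mfn t * μbar i - Real.exp (-β) * (a * ((Mfn t - mfn t) * μmin)) := by
        linear_combination (Mfn t * μbar i) * hee'
      have e4 : (Mfn t - c' * (Mfn t - mfn t)) * μbar i
          = Mfn t * μbar i - c' * (Mfn t - mfn t) * μbar i := by ring
      rw [e4]
      rw [e3] at e2
      linarith [hc'dμ i]
    -- lower estimate
    have hlo : ∀ i, (mfn t + c' * (Mfn t - mfn t)) * μbar i ≤ z (t + 1) i := by
      intro i
      rw [hzstep t 1]
      simp only [mul_one]
      have hdrop : E 1 i j₁ * (z t j₁ - mfn t * μbar j₁)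
          ≤ ∑ j, E 1 i j * (z t j - mfn t * μbar j) :=
        Finset.single_le_sum (f := fun j => E 1 i j * (z t j - mfn t * μbar j))
          (fun j _ => mul_nonneg (hEnonneg 1 zero_le_one i j) (sub_nonneg.mpr (hm_le t j)))
          (Finset.mem_univ j₁)
      have hterm : a * ((Mfn t - mfn t) * μmin) ≤ E 1 i j₁ * (z t j₁ - mfn t * μbar j₁) := by
        rw [hzj₁, show Mfn t * μbar j₁ - mfn t * μbar j₁ = (Mfn t - mfn t) * μbar j₁ by ring]
        exact mul_le_mul (hE1 i j₁) (mul_le_mul_of_nonneg_left (hμmin_le j₁) hd0)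
          (by positivity) ((ha_pos.le).trans (hE1 i j₁))
      have hsplit : (∑ j, E 1 i j * z t j)
          = (∑ j, E 1 i j * (mfn t * μbar j)) + ∑ j, E 1 i j * (z t j - mfn t * μbar j) := by
        rw [← Finset.sum_add_distrib]
        exact Finset.sum_congr rfl fun j _ => by ring
      have h2 : (∑ j, E 1 i j * (mfn t * μbar j)) = mfn t * (Real.exp β * μbar i) := by
        calc (∑ j, E 1 i j * (mfn t * μbar j)) = mfn t * ∑ j, E 1 i j * μbar j := by
              rw [Finset.mul_sum]; exact Finset.sum_congr rfl fun j _ => by ring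
          _ = mfn t * (Real.exp β * μbar i) := by rw [hE1exp i]
      have hloS : mfn t * (Real.exp β * μbar i) + a * ((Mfn t - mfn t) * μmin)
          ≤ (∑ j, E 1 i j * z t j) := by
        rw [hsplit, h2]
        linarith [hterm.trans hdrop]
      have e2 : Real.exp (-β) * (mfn t * (Real.exp β * μbar i) + a * ((Mfn t - mfn t) * μmin))
          ≤ Real.exp (-β) * ((E 1).mulVec (z t) i) := by
        apply mul_le_mul_of_nonneg_left _ (Real.exp_nonneg _)
        rw [hEsum 1 i (z t)]
        exact hloS
      have e3 : Real.exp (-β) * (mfn t * (Real.exp β * μbar i) + a * ((Mfn t - mfn t) * μmin))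
          = mfn t * μbar i + Real.exp (-β) * (a * ((Mfn t - mfn t) * μmin)) := by
        linear_combination (mfn t * μbar i) * hee'
      have e4 : (mfn t + c' * (Mfn t - mfn t)) * μbar i
          = mfn t * μbar i + c' * (Mfn t - mfn t) * μbar i := by ring
      rw [e4]
      rw [e3] at e2
      linarith [hc'dμ i]
    have hMfn1 : Mfn (t + 1) ≤ Mfn t - c' * (Mfn t - mfn t) := by
      apply Finset.sup'_le
      intro i _
      rw [div_le_iff₀ (hμpos i)]
      exact hup i
    have hmfn1 : mfn t + c' * (Mfn t - mfn t) ≤ mfn (t + 1) := by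
      apply Finset.le_inf'
      intro i _
      rw [le_div_iff₀ (hμpos i)]
      exact hlo i
    rw [hq_def]
    linarith
  -- geometric decay of the oscillation
  set D : ℝ → ℝ := fun t => Mfn t - mfn t with hD_def
  have hD0 : ∀ t, 0 ≤ D t := fun t => sub_nonneg.mpr (hmM t)
  have hD_dec : ∀ t s : ℝ, 0 ≤ s → D (t + s) ≤ D t := by
    intro t s hs
    have h1 := hm_mono t s hs
    have h2 := hM_anti t s hs
    rw [hD_def]
    simp only
    linarith
  have hD_nat : ∀ k : ℕ, D (k : ℝ) ≤ q ^ k * D 0 := by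
    intro k
    induction k with
    | zero => simp
    | succ k ih =>
      have h1 : D ((k : ℝ) + 1) ≤ q * D (k : ℝ) := hcontr (k : ℝ)
      have h2 : q * D (k : ℝ) ≤ q * (q ^ k * D 0) := mul_le_mul_of_nonneg_left ih hq0
      push_cast
      calc D ((k : ℝ) + 1) ≤ q * (q ^ k * D 0) := h1.trans h2
        _ = q ^ (k + 1) * D 0 := by ring
  have hD_to0 : Tendsto D atTop (nhds 0) := by
    have hupper : Tendsto (fun t : ℝ => q ^ (Nat.floor t) * D 0) atTop (nhds 0) := by
      have h1 : Tendsto (fun k : ℕ => q ^ k) atTop (nhds 0) :=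
        tendsto_pow_atTop_nhds_zero_of_lt_one hq0 hq1
      have h2 := (h1.comp (tendsto_nat_floor_atTop (α := ℝ))).mul_const (D 0)
      simpa using h2
    apply tendsto_of_tendsto_of_tendsto_of_le_of_le' tendsto_const_nhds hupper
    · exact Eventually.of_forall fun t => hD0 t
    · filter_upwards [eventually_ge_atTop (0:ℝ)] with t ht
      have hfl : (Nat.floor t : ℝ) ≤ t := Nat.floor_le ht
      have h1 : D t ≤ D (Nat.floor t : ℝ) := by
        have := hD_dec (Nat.floor t : ℝ) (t - Nat.floor t) (by linarith)
        rwa [add_sub_cancel] at this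
      exact h1.trans (hD_nat (Nat.floor t))
  -- limits
  have hm_monotone : Monotone mfn := by
    intro t t' h
    have := hm_mono t (t' - t) (by linarith)
    rwa [add_sub_cancel] at this
  have hM_antitone : Antitone Mfn := by
    intro t t' h
    have := hM_anti t (t' - t) (by linarith)
    rwa [add_sub_cancel] at this
  have hbdd : BddAbove (Set.range mfn) := by
    refine ⟨Mfn 0, ?_⟩
    rintro x ⟨t, rfl⟩
    calc mfn t ≤ mfn (max t 0) := hm_monotone (le_max_left t 0)
      _ ≤ Mfn (max t 0) := hmM _
      _ ≤ Mfn 0 := hM_antitone (le_max_right t 0)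
  set L : ℝ := ⨆ t, mfn t with hL_def
  have h_mL : Tendsto mfn atTop (nhds L) := tendsto_atTop_ciSup hm_monotone hbdd
  have hm_le_L : ∀ t, mfn t ≤ L := fun t => le_ciSup hbdd t
  have hL_le_M : ∀ t, L ≤ Mfn t := by
    intro t
    apply ciSup_le
    intro s
    calc mfn s ≤ mfn (max s t) := hm_monotone (le_max_left s t)
      _ ≤ Mfn (max s t) := hmM _
      _ ≤ Mfn t := hM_antitone (le_max_right s t)
  -- L is positive
  have hz1 : ∀ i, Real.exp (-β) * a ≤ z 1 i := by
    intro i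
    have h0 : z 1 i = Real.exp (-(β * 1)) * ((E 1).mulVec (ν 0) i) := rfl
    rw [h0, mul_one]
    have h2 : a ≤ (E 1).mulVec (ν 0) i := by
      calc a = ∑ j, a * ν 0 j := by rw [← Finset.mul_sum, h0sum, mul_one]
        _ ≤ ∑ j, E 1 i j * ν 0 j := Finset.sum_le_sum fun j _ =>
            mul_le_mul_of_nonneg_right (hE1 i j) (h0nonneg j)
        _ = (E 1).mulVec (ν 0) i := (hEsum 1 i (ν 0)).symm
    exact mul_le_mul_of_nonneg_left h2 (Real.exp_nonneg _)
  have hm1 : Real.exp (-β) * a ≤ mfn 1 := by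
    apply Finset.le_inf'
    intro i _
    rw [le_div_iff₀ (hμpos i)]
    calc Real.exp (-β) * a * μbar i ≤ Real.exp (-β) * a * 1 :=
          mul_le_mul_of_nonneg_left (hμle1 i) (by positivity)
      _ = Real.exp (-β) * a := mul_one _
      _ ≤ z 1 i := hz1 i
  have hLpos : 0 < L := lt_of_lt_of_le (by positivity) (hm1.trans (hm_le_L 1))
  -- convergence of z
  have hM_L : Tendsto Mfn atTop (nhds L) := by
    have heq : Mfn = fun t => mfn t + D t := by
      funext t
      rw [hD_def]
      simp only
      ring
    rw [heq]
    simpa using h_mL.add hD_to0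
  have hz_lim : ∀ i, Tendsto (fun t => z t i) atTop (nhds (L * μbar i)) := by
    intro i
    have hbound : ∀ t, |z t i - L * μbar i| ≤ D t * μbar i := by
      intro t
      have e1 : mfn t * μbar i ≤ L * μbar i :=
        mul_le_mul_of_nonneg_right (hm_le_L t) (hμpos i).le
      have e2 : L * μbar i ≤ Mfn t * μbar i :=
        mul_le_mul_of_nonneg_right (hL_le_M t) (hμpos i).le
      have e3 : D t * μbar i = Mfn t * μbar i - mfn t * μbar i := by
        rw [hD_def]; ring
      rw [abs_le, e3]
      constructor
      · linarith [hm_le t i, hM_ge t i]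
      · linarith [hm_le t i, hM_ge t i]
    have h0 : Tendsto (fun t => D t * μbar i) atTop (nhds 0) := by
      simpa using hD_to0.mul_const (μbar i)
    have h1 : Tendsto (fun t => z t i - L * μbar i) atTop (nhds 0) :=
      squeeze_zero_norm (fun t => by
        rw [Real.norm_eq_abs]; exact hbound t) h0
    have h2 := h1.add_const (L * μbar i)
    simpa using h2
  have hsum_lim : Tendsto (fun t => ∑ j, z t j) atTop (nhds L) := by
    have h := tendsto_finset_sum Finset.univ (fun j (_ : j ∈ Finset.univ) => hz_lim j)
    have heq : (∑ j, L * μbar j) = L := by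
      rw [← Finset.mul_sum, hμsum, mul_one]
    rwa [heq] at h
  -- identification of ν with the normalized z
  have hσz : ∀ t, (∑ j, z t j) = Real.exp (-(β * t)) * Real.exp (R t) := by
    intro t
    have h1 : (∑ j, z t j) = Real.exp (-(β * t)) * ∑ j, u t j := by
      rw [Finset.mul_sum]
    rw [h1, hσ t]
  have hν_eq : ∀ t i, ν t i = z t i / (∑ j, z t j) := by
    intro t i
    rw [hνu t i, hσz t]
    show u t i / Real.exp (R t)
      = (Real.exp (-(β * t)) * u t i) / (Real.exp (-(β * t)) * Real.exp (R t))
    rw [mul_div_mul_left _ _ (Real.exp_ne_zero _)]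
  -- conclusion
  rw [tendsto_pi_nhds]
  intro i
  have hdiv := (hz_lim i).div hsum_lim (ne_of_gt hLpos)
  have hdiv' := Filter.Tendsto.congr (fun t => (hν_eq t i).symm) hdiv
  have hLL : L * μbar i / L = μbar i := by
    field_simp
  rwa [hLL] at hdiv'
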